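/- If a function f : L_1 × ⋯ × L_n → L is pseudo-comonotonic minitive or pseudo-comonotonic maxitive w.r.t. local utility functions φ_1,…,φ_n with common range R, then f is order-preserving. -/

import Mathlib

open Function

/-- A lattice polynomial function on a chain `M`: a member of the smallest set of `n`-ary
functions containing all projections and constants and closed under pointwise `⊓` and `⊔`. -/
inductive IsLatticePolynomial {M : Type*} [LinearOrder M] {n : ℕ} :
    ((Fin n → M) → M) → Prop
  | proj (i : Fin n) : IsLatticePolynomial fun x => x i
  | const (c : M) : IsLatticePolynomial fun _ => c
  | inf {p q : (Fin n → M) → M} :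
      IsLatticePolynomial p → IsLatticePolynomial q →
      IsLatticePolynomial fun x => p x ⊓ q x
  | sup {p q : (Fin n → M) → M} :
      IsLatticePolynomial p → IsLatticePolynomial q →
      IsLatticePolynomial fun x => p x ⊔ q x

/-- A Sugeno integral: an idempotent lattice polynomial function. -/
def IsSugenoIntegral {M : Type*} [LinearOrder M] {n : ℕ} (q : (Fin n → M) → M) : Prop :=
  IsLatticePolynomial q ∧ ∀ c : M, q (fun _ => c) = c

/-- `φ` satisfies the boundary conditions: `φ 0 ≤ φ x ≤ φ 1` for all `x`. -/
def BoundaryCond {α : Type*} {M : Type*} [LE α] [OrderTop α] [OrderBot α] [Preorder M]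
    (φ : α → M) : Prop :=
  ∀ x : α, φ ⊥ ≤ φ x ∧ φ x ≤ φ ⊤

/-- The median of three elements of a lattice. -/
def med {α : Type*} [Lattice α] (a b c : α) : α :=
  (a ⊓ b) ⊔ (a ⊓ c) ⊔ (b ⊓ c)

/-- Two `n`-tuples are comonotonic if some permutation sorts both simultaneously. -/
def Comonotone {M : Type*} [Preorder M] {n : ℕ} (y y' : Fin n → M) : Prop :=
  ∃ σ : Equiv.Perm (Fin n), Monotone (y ∘ σ) ∧ Monotone (y' ∘ σ)

section PiDefs

variable {n : ℕ} {M : Type*} {L : Fin n → Type*}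
variable [∀ i, LinearOrder (L i)] [∀ i, BoundedOrder (L i)]
variable [LinearOrder M] [BoundedOrder M]

/-- A pseudo-polynomial function: composition of a lattice polynomial function with unary
maps satisfying the boundary conditions. -/
def IsPseudoPolynomial (f : (∀ i, L i) → M) : Prop :=
  ∃ (p : (Fin n → M) → M) (φ : ∀ i, L i → M),
    IsLatticePolynomial p ∧ (∀ i, BoundaryCond (φ i)) ∧
      ∀ x, f x = p fun i => φ i (x i)

/-- A pseudo-Sugeno integral: composition of a Sugeno integral with unary maps satisfying
the boundary conditions. -/
def IsPseudoSugenoIntegral (f : (∀ i, L i) → M) : Prop :=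
  ∃ (q : (Fin n → M) → M) (φ : ∀ i, L i → M),
    IsSugenoIntegral q ∧ (∀ i, BoundaryCond (φ i)) ∧
      ∀ x, f x = q fun i => φ i (x i)

/-- A Sugeno utility function: composition of a Sugeno integral with local utility
(order-preserving) functions. -/
def IsSugenoUtility (f : (∀ i, L i) → M) : Prop :=
  ∃ (q : (Fin n → M) → M) (φ : ∀ i, L i → M),
    IsSugenoIntegral q ∧ (∀ i, Monotone (φ i)) ∧
      ∀ x, f x = q fun i => φ i (x i)

/-- `f` is pseudo-median decomposable w.r.t. the unary maps `φ`. -/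
def PseudoMedianDecomp (f : (∀ i, L i) → M) (φ : ∀ i, L i → M) : Prop :=
  ∀ (x : ∀ i, L i) (k : Fin n),
    f x = med (f (update x k ⊥)) (φ k (x k)) (f (update x k ⊤))

/-- `d ∈ φ̄⁻¹(c)`: all components of `d` are mapped to `c` by the corresponding `φ i`. -/
def FiberAll (φ : ∀ i, L i → M) (c : M) (d : ∀ i, L i) : Prop :=
  ∀ i, φ i (d i) = c

/-- `f` is pseudo-min homogeneous w.r.t. `φ` with common range `R`. -/
def PseudoMinHomog (f : (∀ i, L i) → M) (φ : ∀ i, L i → M) (R : Set M) : Prop :=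
  ∀ (x : ∀ i, L i), ∀ c ∈ R, ∀ d : ∀ i, L i, FiberAll φ c d →
    f (fun i => x i ⊓ d i) = f x ⊓ c

/-- `f` is pseudo-max homogeneous w.r.t. `φ` with common range `R`. -/
def PseudoMaxHomog (f : (∀ i, L i) → M) (φ : ∀ i, L i → M) (R : Set M) : Prop :=
  ∀ (x : ∀ i, L i), ∀ c ∈ R, ∀ d : ∀ i, L i, FiberAll φ c d →
    f (fun i => x i ⊔ d i) = f x ⊔ c

/-- Condition (PI): `f d = c` whenever `d ∈ φ̄⁻¹(c)`, `c ∈ R`. -/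
def PseudoPI (f : (∀ i, L i) → M) (φ : ∀ i, L i → M) (R : Set M) : Prop :=
  ∀ c ∈ R, ∀ d : ∀ i, L i, FiberAll φ c d → f d = c

/-- `[x]_d`: the tuple whose `i`th component is `0` if `x i ≤ d i`, and `x i` otherwise. -/
def cutBelow (x d : ∀ i, L i) : ∀ i, L i := fun i => if x i ≤ d i then ⊥ else x i

/-- `[x]^d`: the tuple whose `i`th component is `1` if `x i ≥ d i`, and `x i` otherwise. -/
def cutAbove (x d : ∀ i, L i) : ∀ i, L i := fun i => if d i ≤ x i then ⊤ else x i

/-- `f` is pseudo-horizontally maxitive w.r.t. `φ` with common range `R`. -/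
def PseudoHorizMax (f : (∀ i, L i) → M) (φ : ∀ i, L i → M) (R : Set M) : Prop :=
  ∀ (x : ∀ i, L i), ∀ c ∈ R, ∀ d : ∀ i, L i, FiberAll φ c d →
    f x = f (fun i => x i ⊓ d i) ⊔ f (cutBelow x d)

/-- `f` is pseudo-horizontally minitive w.r.t. `φ` with common range `R`. -/
def PseudoHorizMin (f : (∀ i, L i) → M) (φ : ∀ i, L i → M) (R : Set M) : Prop :=
  ∀ (x : ∀ i, L i), ∀ c ∈ R, ∀ d : ∀ i, L i, FiberAll φ c d →
    f x = f (fun i => x i ⊔ d i) ⊓ f (cutAbove x d)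

/-- `f` is pseudo-comonotonic minitive w.r.t. `φ`. -/
def PseudoComonMin (f : (∀ i, L i) → M) (φ : ∀ i, L i → M) : Prop :=
  ∀ x x' : ∀ i, L i,
    Comonotone (fun i => φ i (x i)) (fun i => φ i (x' i)) →
      f (fun i => x i ⊓ x' i) = f x ⊓ f x'

/-- `f` is pseudo-comonotonic maxitive w.r.t. `φ`. -/
def PseudoComonMax (f : (∀ i, L i) → M) (φ : ∀ i, L i → M) : Prop :=
  ∀ x x' : ∀ i, L i,
    Comonotone (fun i => φ i (x i)) (fun i => φ i (x' i)) →
      f (fun i => x i ⊔ x' i) = f x ⊔ f x'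

/-- The disjunctive normal form polynomial determined by the values of `f` on the
characteristic vectors `e_I`: `y ↦ ⋁_{I ⊆ [n]} (f(e_I) ∧ ⋀_{i ∈ I} y i)`. -/
def qDNF (f : (∀ i, L i) → M) : (Fin n → M) → M :=
  fun y => Finset.univ.sup fun I : Finset (Fin n) =>
    f (fun i => if i ∈ I then ⊤ else ⊥) ⊓ I.inf y

end PiDefs

section ChainDefs

variable {n : ℕ} {M : Type*} [LinearOrder M] [BoundedOrder M]

/-- The DNF polynomial `y ↦ ⋁_{I ⊆ [n]} (p(e_I) ∧ ⋀_{i ∈ I} y i)` for `p : M^n → M`. -/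
def polyDNF (p : (Fin n → M) → M) : (Fin n → M) → M :=
  fun y => Finset.univ.sup fun I : Finset (Fin n) =>
    p (fun i => if i ∈ I then ⊤ else ⊥) ⊓ I.inf y

/-- The convex hull of the range of `p` (in a chain). -/
def clRan (p : (Fin n → M) → M) : Set M :=
  {c : M | ∃ a ∈ Set.range p, ∃ b ∈ Set.range p, a ≤ c ∧ c ≤ b}

/-- Median decomposability of `p : M^n → M`. -/
def MedianDecomp (p : (Fin n → M) → M) : Prop :=
  ∀ (x : Fin n → M) (k : Fin n),
    p x = med (p (update x k ⊥)) (x k) (p (update x k ⊤))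

/-- `S`-min homogeneity: `p(x ∧ c) = p(x) ∧ c` for all `c ∈ S`. -/
def MinHomogOn (p : (Fin n → M) → M) (S : Set M) : Prop :=
  ∀ (x : Fin n → M), ∀ c ∈ S, p (fun i => x i ⊓ c) = p x ⊓ c

/-- `S`-max homogeneity: `p(x ∨ c) = p(x) ∨ c` for all `c ∈ S`. -/
def MaxHomogOn (p : (Fin n → M) → M) (S : Set M) : Prop :=
  ∀ (x : Fin n → M), ∀ c ∈ S, p (fun i => x i ⊔ c) = p x ⊔ c

/-- Range-idempotence: `p(c,…,c) = c` for every `c` in the convex hull of the range. -/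
def RangeIdempotent (p : (Fin n → M) → M) : Prop :=
  ∀ c ∈ clRan p, p (fun _ => c) = c

/-- Horizontal minitivity: `p(x) = p(x ∨ c) ∧ p([x]^c)`. -/
def HorizMin (p : (Fin n → M) → M) : Prop :=
  ∀ (x : Fin n → M) (c : M),
    p x = p (fun i => x i ⊔ c) ⊓ p (fun i => if c ≤ x i then ⊤ else x i)

/-- Horizontal maxitivity: `p(x) = p(x ∧ c) ∨ p([x]_c)`. -/
def HorizMax (p : (Fin n → M) → M) : Prop :=
  ∀ (x : Fin n → M) (c : M),
    p x = p (fun i => x i ⊓ c) ⊔ p (fun i => if x i ≤ c then ⊥ else x i)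

end ChainDefs

/-- If no pair of indices crosses, then the tuples are comonotone: sort the pairs
lexicographically. -/
lemma comonotone_of_noCross {M : Type*} [LinearOrder M] {n : ℕ} (y y' : Fin n → M)
    (h : ∀ i j, y i < y j → y' i ≤ y' j) : Comonotone y y' := by
  classical
  set g : Fin n → M ×ₗ M := fun i => toLex (y i, y' i) with hg
  refine ⟨Tuple.sort g, ?_, ?_⟩
  · intro p q hpq
    have hle := Tuple.monotone_sort g hpq
    rcases Prod.Lex.le_iff.1 hle with h1 | ⟨h1, _⟩
    · exact le_of_lt h1
    · exact le_of_eq h1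
  · intro p q hpq
    have hle := Tuple.monotone_sort g hpq
    rcases Prod.Lex.le_iff.1 hle with h1 | ⟨_, h2⟩
    · exact h _ _ h1
    · exact h2

/-- a function that is pseudo-comonotonic minitive or pseudo-comonotonic
maxitive w.r.t. local utility functions with common range `R` is order-preserving. -/
theorem monotone_of_pseudoComon
    {n : ℕ} {M : Type*} {L : Fin n → Type*}
    [∀ i, LinearOrder (L i)] [∀ i, BoundedOrder (L i)]
    [LinearOrder M] [BoundedOrder M] (f : (∀ i, L i) → M) (φ : ∀ i, L i → M) (R : Set M)
    (hφ : ∀ i, Monotone (φ i)) (hR : ∀ i, Set.range (φ i) = R)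
    (h : PseudoComonMin f φ ∨ PseudoComonMax f φ) :
    Monotone f := by
  classical
  -- Step lemma: comparable comonotone tuples.
  have Hstep : ∀ u v : ∀ i, L i, u ≤ v →
      Comonotone (fun i => φ i (u i)) (fun i => φ i (v i)) → f u ≤ f v := by
    intro u v huv hc
    have hinf : (fun i => u i ⊓ v i) = u := funext fun i => inf_eq_left.2 (huv i)
    have hsup : (fun i => u i ⊔ v i) = v := funext fun i => sup_eq_right.2 (huv i)
    rcases h with hm | hm
    · have := hm u v hc
      rw [hinf] at this
      exact this.trans_le inf_le_right
    · have := hm u v hc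
      rw [hsup] at this
      exact le_sup_left.trans this.ge
  -- Comonotonicity of a one-coordinate update when no value lies strictly between.
  have Hcom : ∀ (x : ∀ i, L i) (k : Fin n) (a b : L k), a ≤ b →
      (∀ j, ¬(φ k a < φ j (x j) ∧ φ j (x j) < φ k b)) →
      Comonotone (fun i => φ i (Function.update x k a i))
        (fun i => φ i (Function.update x k b i)) := by
    intro x k a b hab hno
    apply comonotone_of_noCross
    intro i j hij
    by_cases hik : i = k
    · subst hik
      by_cases hjk : j = i
      · subst hjk; exact le_rfl
      · rw [Function.update_self] at hij
        rw [Function.update_of_ne hjk] at hij ⊢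
        rw [Function.update_self]
        have := hno j
        push_neg at this
        exact this hij
    · rw [Function.update_of_ne hik] at hij ⊢
      by_cases hjk : j = k
      · subst hjk
        rw [Function.update_self] at hij ⊢
        exact (le_of_lt hij).trans (hφ _ hab)
      · rw [Function.update_of_ne hjk] at hij ⊢
        exact le_of_lt hij
  have Hupd : ∀ (x : ∀ i, L i) (k : Fin n) (a b : L k), a ≤ b →
      Function.update x k a ≤ Function.update x k b := by
    intro x k a b hab i
    by_cases hik : i = k
    · subst hik; rw [Function.update_self, Function.update_self]; exact hab
    · rw [Function.update_of_ne hik, Function.update_of_ne hik]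
  -- Coordinate-wise monotonicity, by strong induction on the set of values in between.
  have Hcoord : ∀ s : Finset (Fin n), ∀ (x : ∀ i, L i) (k : Fin n) (a b : L k), a ≤ b →
      (∀ j, φ k a < φ j (x j) → φ j (x j) < φ k b → j ∈ s) →
      f (Function.update x k a) ≤ f (Function.update x k b) := by
    intro s
    induction s using Finset.strongInduction with
    | _ s ih =>
      intro x k a b hab hsub
      by_cases hB : ∀ j, ¬(φ k a < φ j (x j) ∧ φ j (x j) < φ k b)
      · exact Hstep _ _ (Hupd x k a b hab) (Hcom x k a b hab hB)
      · push_neg at hB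
        obtain ⟨j, h1, h2⟩ := hB
        have hjs : j ∈ s := hsub j h1 h2
        have hmem : φ j (x j) ∈ Set.range (φ k) := by
          rw [hR k, ← hR j]; exact ⟨x j, rfl⟩
        obtain ⟨c, hc⟩ := hmem
        have hac : a ≤ c := by
          by_contra hle
          exact absurd (hφ k (le_of_not_ge hle)) (not_le.2 (hc ▸ h1))
        have hcb : c ≤ b := by
          by_contra hle
          exact absurd (hφ k (le_of_not_ge hle)) (not_le.2 (hc ▸ h2))
        have step1 : f (Function.update x k a) ≤ f (Function.update x k c) := by
          refine ih (s.erase j) (Finset.erase_ssubset hjs) x k a c hac ?_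
          intro j' hj1 hj2
          rw [hc] at hj2
          refine Finset.mem_erase.2 ⟨fun hjj => ?_, hsub j' hj1 (hj2.trans h2)⟩
          subst hjj; exact lt_irrefl _ hj2
        have step2 : f (Function.update x k c) ≤ f (Function.update x k b) := by
          refine ih (s.erase j) (Finset.erase_ssubset hjs) x k c b hcb ?_
          intro j' hj1 hj2
          rw [hc] at hj1
          refine Finset.mem_erase.2 ⟨fun hjj => ?_, hsub j' (h1.trans hj1) hj2⟩
          subst hjj; exact lt_irrefl _ hj1
        exact step1.trans step2
  -- Assemble: change one coordinate at a time.
  have Hfin : ∀ s : Finset (Fin n), ∀ x y : ∀ i, L i, x ≤ y →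
      (∀ i, x i ≠ y i → i ∈ s) → f x ≤ f y := by
    intro s
    induction s using Finset.induction with
    | empty =>
      intro x y _ hd
      have hxy : x = y := funext fun i => by_contra fun hne => absurd (hd i hne) (Finset.notMem_empty i)
      rw [hxy]
    | @insert k s hk ih =>
      intro x y hxy hd
      have hxz : f x ≤ f (Function.update x k (y k)) := by
        calc f x = f (Function.update x k (x k)) := by rw [Function.update_eq_self]
          _ ≤ f (Function.update x k (y k)) :=
            Hcoord Finset.univ x k (x k) (y k) (hxy k) fun _ _ _ => Finset.mem_univ _
      have hzy : f (Function.update x k (y k)) ≤ f y := by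
        refine ih _ y ?_ ?_
        · intro i
          by_cases hik : i = k
          · subst hik; rw [Function.update_self]
          · rw [Function.update_of_ne hik]; exact hxy i
        · intro i hne
          by_cases hik : i = k
          · subst hik; rw [Function.update_self] at hne; exact (hne rfl).elim
          · rw [Function.update_of_ne hik] at hne
            rcases Finset.mem_insert.1 (hd i hne) with h' | h'
            · exact (hik h').elim
            · exact h'
      exact hxz.trans hzy
  intro x y hxy
  exact Hfin Finset.univ x y hxy fun i _ => Finset.mem_univ i
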